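/- For every 2×2 complex matrix ρ and all θ ∈ (0,π), φ ∈ ℝ, the sine bracket with each Pauli generator is realized by the first-order differential operators 𝒥: Q_{−i(σxρ−ρσx)}(θ,φ) = 2( sinφ · ∂Q_ρ/∂θ + cotθ cosφ · ∂Q_ρ/∂φ ), Q_{−i(σyρ−ρσy)}(θ,φ) = 2( −cosφ · ∂Q_ρ/∂θ + cotθ sinφ · ∂Q_ρ/∂φ ), and Q_{−i(σzρ−ρσz)}(θ,φ) = −2 · ∂Q_ρ/∂φ. -/

import Mathlib

open Matrix Complex Real MeasureTheory

noncomputable section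

/-- The spin coherent state |θ,φ⟩ = cos(θ/2)|0⟩ + e^{iφ} sin(θ/2)|1⟩. -/
def cohVec (θ φ : ℝ) : Fin 2 → ℂ :=
  ![((Real.cos (θ / 2) : ℝ) : ℂ),
    Complex.exp (Complex.I * (φ : ℂ)) * ((Real.sin (θ / 2) : ℝ) : ℂ)]

/-- The Husimi Q function of a 2×2 complex matrix. -/
def Qfun (A : Matrix (Fin 2) (Fin 2) ℂ) (θ φ : ℝ) : ℂ :=
  (1 / (2 * Real.pi) : ℂ) *
    ∑ k, ∑ l, (starRingEnd ℂ) (cohVec θ φ k) * A k l * cohVec θ φ l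

/-- ∂Q_A/∂θ. -/
def Qθ (A : Matrix (Fin 2) (Fin 2) ℂ) (θ φ : ℝ) : ℂ :=
  deriv (fun t => Qfun A t φ) θ

/-- ∂Q_A/∂φ. -/
def Qφ (A : Matrix (Fin 2) (Fin 2) ℂ) (θ φ : ℝ) : ℂ :=
  deriv (fun p => Qfun A θ p) φ

def σx : Matrix (Fin 2) (Fin 2) ℂ := !![0, 1; 1, 0]
def σy : Matrix (Fin 2) (Fin 2) ℂ := !![0, -Complex.I; Complex.I, 0]
def σz : Matrix (Fin 2) (Fin 2) ℂ := !![1, 0; 0, -1]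

lemma Qfun_expand (A : Matrix (Fin 2) (Fin 2) ℂ) (t p : ℝ) :
    Qfun A t p = (1 / (2 * Real.pi) : ℂ) *
      (((Real.cos (t/2) : ℝ) : ℂ) * ((Real.cos (t/2) : ℝ) : ℂ) * A 0 0
        + ((Real.cos (t/2) : ℝ) : ℂ) * ((Real.sin (t/2) : ℝ) : ℂ) *
            (Complex.exp (Complex.I * (p : ℂ)) * A 0 1)
        + ((Real.cos (t/2) : ℝ) : ℂ) * ((Real.sin (t/2) : ℝ) : ℂ) *
            (Complex.exp (-(Complex.I * (p : ℂ))) * A 1 0)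
        + ((Real.sin (t/2) : ℝ) : ℂ) * ((Real.sin (t/2) : ℝ) : ℂ) * A 1 1) := by
  have hconj : (starRingEnd ℂ) (Complex.exp (Complex.I * (p : ℂ)))
      = Complex.exp (-(Complex.I * (p : ℂ))) := by
    rw [← Complex.exp_conj, _root_.map_mul, Complex.conj_I, Complex.conj_ofReal, neg_mul]
  have hEE : Complex.exp (Complex.I * (p : ℂ)) * Complex.exp (-(Complex.I * (p : ℂ))) = 1 := by
    rw [← Complex.exp_add]; simp
  simp only [Qfun, cohVec, Fin.sum_univ_two, Matrix.cons_val_zero, Matrix.cons_val_one,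
    Matrix.head_cons, _root_.map_mul, Complex.conj_ofReal, hconj]
  linear_combination (((Real.pi : ℝ) : ℂ))⁻¹ * ((Real.sin (t/2) : ℝ) : ℂ) *
    ((Real.sin (t/2) : ℝ) : ℂ) * A 1 1 * (1/2) * hEE

lemma Qθ_eq (A : Matrix (Fin 2) (Fin 2) ℂ) (θ φ : ℝ) :
    Qθ A θ φ = (1 / (2 * Real.pi) : ℂ) *
      (-(((Real.cos (θ/2) : ℝ) : ℂ) * ((Real.sin (θ/2) : ℝ) : ℂ)) * A 0 0
        + ((((Real.cos (θ/2) : ℝ) : ℂ) * ((Real.cos (θ/2) : ℝ) : ℂ)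
            - ((Real.sin (θ/2) : ℝ) : ℂ) * ((Real.sin (θ/2) : ℝ) : ℂ)) / 2) *
            (Complex.exp (Complex.I * (φ : ℂ)) * A 0 1
              + Complex.exp (-(Complex.I * (φ : ℂ))) * A 1 0)
        + (((Real.cos (θ/2) : ℝ) : ℂ) * ((Real.sin (θ/2) : ℝ) : ℂ)) * A 1 1) := by
  have h2 : HasDerivAt (fun t : ℝ => t / 2) (1 / 2) θ := (hasDerivAt_id θ).div_const 2
  have hc : HasDerivAt (fun t : ℝ => ((Real.cos (t/2) : ℝ) : ℂ))
      (((-Real.sin (θ/2) * (1/2) : ℝ) : ℂ)) θ :=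
    HasDerivAt.ofReal_comp (by exact (Real.hasDerivAt_cos (θ/2)).comp θ h2)
  have hs : HasDerivAt (fun t : ℝ => ((Real.sin (t/2) : ℝ) : ℂ))
      (((Real.cos (θ/2) * (1/2) : ℝ) : ℂ)) θ :=
    HasDerivAt.ofReal_comp (by exact (Real.hasDerivAt_sin (θ/2)).comp θ h2)
  have H := (((((hc.mul hc).mul_const (A 0 0)).add
      ((hc.mul hs).mul_const (Complex.exp (Complex.I * (φ : ℂ)) * A 0 1))).add
      ((hc.mul hs).mul_const (Complex.exp (-(Complex.I * (φ : ℂ))) * A 1 0))).add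
      ((hs.mul hs).mul_const (A 1 1))).const_mul (1 / (2 * Real.pi) : ℂ)
  show deriv (fun t => Qfun A t φ) θ = _
  rw [show (fun t => Qfun A t φ) = (fun t : ℝ => (1 / (2 * Real.pi) : ℂ) *
      (((Real.cos (t/2) : ℝ) : ℂ) * ((Real.cos (t/2) : ℝ) : ℂ) * A 0 0
        + ((Real.cos (t/2) : ℝ) : ℂ) * ((Real.sin (t/2) : ℝ) : ℂ) *
            (Complex.exp (Complex.I * (φ : ℂ)) * A 0 1)
        + ((Real.cos (t/2) : ℝ) : ℂ) * ((Real.sin (t/2) : ℝ) : ℂ) *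
            (Complex.exp (-(Complex.I * (φ : ℂ))) * A 1 0)
        + ((Real.sin (t/2) : ℝ) : ℂ) * ((Real.sin (t/2) : ℝ) : ℂ) * A 1 1))
    from funext fun t => Qfun_expand A t φ]
  refine H.deriv.trans ?_
  push_cast
  ring

lemma Qφ_eq (A : Matrix (Fin 2) (Fin 2) ℂ) (θ φ : ℝ) :
    Qφ A θ φ = (1 / (2 * Real.pi) : ℂ) *
      (Complex.I * (((Real.cos (θ/2) : ℝ) : ℂ) * ((Real.sin (θ/2) : ℝ) : ℂ)) *
          (Complex.exp (Complex.I * (φ : ℂ)) * A 0 1)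
        - Complex.I * (((Real.cos (θ/2) : ℝ) : ℂ) * ((Real.sin (θ/2) : ℝ) : ℂ)) *
          (Complex.exp (-(Complex.I * (φ : ℂ))) * A 1 0)) := by
  have hE : HasDerivAt (fun p : ℝ => Complex.exp (Complex.I * (p : ℂ)))
      (Complex.exp (Complex.I * (φ : ℂ)) * Complex.I) φ := by
    have h1 : HasDerivAt (fun z : ℂ => Complex.exp (Complex.I * z))
        (Complex.exp (Complex.I * (φ : ℂ)) * Complex.I) ((φ : ℝ) : ℂ) := by
      simpa [Function.comp_def] using (Complex.hasDerivAt_exp (Complex.I * (φ : ℂ))).comp ((φ : ℝ) : ℂ)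
        ((hasDerivAt_id ((φ : ℝ) : ℂ)).const_mul Complex.I)
    exact h1.comp_ofReal
  have hE' : HasDerivAt (fun p : ℝ => Complex.exp (-(Complex.I * (p : ℂ))))
      (-(Complex.exp (-(Complex.I * (φ : ℂ))) * Complex.I)) φ := by
    have h1 : HasDerivAt (fun z : ℂ => Complex.exp (-(Complex.I * z)))
        (-(Complex.exp (-(Complex.I * (φ : ℂ))) * Complex.I)) ((φ : ℝ) : ℂ) := by
      have := (Complex.hasDerivAt_exp (-(Complex.I * (φ : ℂ)))).comp ((φ : ℝ) : ℂ)
        (((hasDerivAt_id ((φ : ℝ) : ℂ)).const_mul Complex.I).neg)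
      simpa [Function.comp_def] using this
    exact h1.comp_ofReal
  have H := ((((hasDerivAt_const φ (((Real.cos (θ/2) : ℝ) : ℂ) * ((Real.cos (θ/2) : ℝ) : ℂ)
        * A 0 0)).add
      ((hE.mul_const (A 0 1)).const_mul (((Real.cos (θ/2) : ℝ) : ℂ) * ((Real.sin (θ/2) : ℝ) : ℂ)))).add
      ((hE'.mul_const (A 1 0)).const_mul (((Real.cos (θ/2) : ℝ) : ℂ) * ((Real.sin (θ/2) : ℝ) : ℂ)))).add
      (hasDerivAt_const φ (((Real.sin (θ/2) : ℝ) : ℂ) * ((Real.sin (θ/2) : ℝ) : ℂ) * A 1 1))).const_mul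
      (1 / (2 * Real.pi) : ℂ)
  show deriv (fun p => Qfun A θ p) φ = _
  rw [show (fun p => Qfun A θ p) = (fun p : ℝ => (1 / (2 * Real.pi) : ℂ) *
      (((Real.cos (θ/2) : ℝ) : ℂ) * ((Real.cos (θ/2) : ℝ) : ℂ) * A 0 0
        + ((Real.cos (θ/2) : ℝ) : ℂ) * ((Real.sin (θ/2) : ℝ) : ℂ) *
            (Complex.exp (Complex.I * (p : ℂ)) * A 0 1)
        + ((Real.cos (θ/2) : ℝ) : ℂ) * ((Real.sin (θ/2) : ℝ) : ℂ) *
            (Complex.exp (-(Complex.I * (p : ℂ))) * A 1 0)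
        + ((Real.sin (θ/2) : ℝ) : ℂ) * ((Real.sin (θ/2) : ℝ) : ℂ) * A 1 1))
    from funext fun p => Qfun_expand A θ p]
  refine H.deriv.trans ?_
  ring

/-- the sine bracket with each Pauli generator is realized by the
first-order differential operators 𝒥 on the Q function. -/
theorem sine_bracket_in_coordinates (ρ : Matrix (Fin 2) (Fin 2) ℂ)
    (θ φ : ℝ) (hθ : θ ∈ Set.Ioo (0 : ℝ) Real.pi) :
    Qfun ((-Complex.I) • (σx * ρ - ρ * σx)) θ φ =
      2 * (((Real.sin φ : ℝ) : ℂ) * Qθ ρ θ φ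
        + ((Real.cos θ / Real.sin θ * Real.cos φ : ℝ) : ℂ) * Qφ ρ θ φ) ∧
    Qfun ((-Complex.I) • (σy * ρ - ρ * σy)) θ φ =
      2 * (-((Real.cos φ : ℝ) : ℂ) * Qθ ρ θ φ
        + ((Real.cos θ / Real.sin θ * Real.sin φ : ℝ) : ℂ) * Qφ ρ θ φ) ∧
    Qfun ((-Complex.I) • (σz * ρ - ρ * σz)) θ φ = -2 * Qφ ρ θ φ := by
  obtain ⟨h0, hπ⟩ := hθ
  have hs0 : Real.sin (θ/2) ≠ 0 :=
    ne_of_gt (Real.sin_pos_of_pos_of_lt_pi (by linarith) (by linarith [Real.pi_pos]))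
  have hc0 : Real.cos (θ/2) ≠ 0 :=
    ne_of_gt (Real.cos_pos_of_mem_Ioo ⟨by linarith [Real.pi_pos], by linarith⟩)
  have hsin2 : Real.sin θ = 2 * Real.sin (θ/2) * Real.cos (θ/2) := by
    have h := Real.sin_two_mul (θ/2)
    rw [show 2 * (θ/2) = θ by ring] at h
    linarith
  have hcos2 : Real.cos θ = Real.cos (θ/2) ^ 2 - Real.sin (θ/2) ^ 2 := by
    have h := Real.cos_two_mul (θ/2)
    rw [show 2 * (θ/2) = θ by ring] at h
    have h2 := Real.sin_sq_add_cos_sq (θ/2)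
    linarith
  have hpy : ((Real.cos φ : ℝ) : ℂ) ^ 2 + ((Real.sin φ : ℝ) : ℂ) ^ 2 = 1 := by
    exact_mod_cast Real.cos_sq_add_sin_sq φ
  have hi : Complex.I ^ 2 = -1 := Complex.I_sq
  have hx : (((Real.cos θ : ℝ) : ℂ) / ((Real.sin θ : ℝ) : ℂ)) *
      (((Real.cos (θ/2) : ℝ) : ℂ) * ((Real.sin (θ/2) : ℝ) : ℂ))
      = (((Real.cos (θ/2) : ℝ) : ℂ) * ((Real.cos (θ/2) : ℝ) : ℂ)
          - ((Real.sin (θ/2) : ℝ) : ℂ) * ((Real.sin (θ/2) : ℝ) : ℂ)) / 2 := by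
    have hs0' : ((Real.sin (θ/2) : ℝ) : ℂ) ≠ 0 := Complex.ofReal_ne_zero.mpr hs0
    have hc0' : ((Real.cos (θ/2) : ℝ) : ℂ) ≠ 0 := Complex.ofReal_ne_zero.mpr hc0
    have hsin2' : ((Real.sin θ : ℝ) : ℂ)
        = 2 * ((Real.sin (θ/2) : ℝ) : ℂ) * ((Real.cos (θ/2) : ℝ) : ℂ) := by
      exact_mod_cast congrArg (fun x : ℝ => (x : ℂ)) hsin2
    have hcos2' : ((Real.cos θ : ℝ) : ℂ)
        = ((Real.cos (θ/2) : ℝ) : ℂ) ^ 2 - ((Real.sin (θ/2) : ℝ) : ℂ) ^ 2 := by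
      exact_mod_cast congrArg (fun x : ℝ => (x : ℂ)) hcos2
    have h2 : (2 : ℂ) * ((Real.sin (θ/2) : ℝ) : ℂ) * ((Real.cos (θ/2) : ℝ) : ℂ) ≠ 0 := by
      exact mul_ne_zero (mul_ne_zero two_ne_zero hs0') hc0'
    rw [hsin2', hcos2', div_mul_eq_mul_div, div_eq_div_iff h2 two_ne_zero]
    ring
  have hEx : Complex.exp (Complex.I * (φ : ℂ))
      = ((Real.cos φ : ℝ) : ℂ) + ((Real.sin φ : ℝ) : ℂ) * Complex.I := by
    rw [mul_comm, Complex.exp_mul_I, Complex.ofReal_cos, Complex.ofReal_sin]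
  have hEx' : Complex.exp (-(Complex.I * (φ : ℂ)))
      = ((Real.cos φ : ℝ) : ℂ) - ((Real.sin φ : ℝ) : ℂ) * Complex.I := by
    rw [show -(Complex.I * (φ : ℂ)) = (((-φ : ℝ) : ℂ)) * Complex.I by push_cast; ring,
      Complex.exp_mul_I, ← Complex.ofReal_cos, ← Complex.ofReal_sin,
      Real.cos_neg, Real.sin_neg]
    push_cast
    ring
  refine ⟨?_, ?_, ?_⟩
  · rw [Qfun_expand, Qθ_eq, Qφ_eq]
    simp only [σx, Matrix.smul_apply, Matrix.sub_apply, Matrix.mul_apply, Fin.sum_univ_two,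
      smul_eq_mul, Matrix.cons_val', Matrix.cons_val_zero, Matrix.cons_val_one,
      Matrix.head_cons, Matrix.head_fin_const, Matrix.empty_val',
      Matrix.cons_val_fin_one, Matrix.of_apply]
    rw [hEx, hEx', Complex.ofReal_mul, Complex.ofReal_div]
    linear_combination
      (Complex.I * (1 / (2 * (Real.pi : ℂ))) *
        (((Real.cos (θ/2) : ℝ) : ℂ) * ((Real.cos (θ/2) : ℝ) : ℂ)
          - ((Real.sin (θ/2) : ℝ) : ℂ) * ((Real.sin (θ/2) : ℝ) : ℂ)) * (ρ 1 0 - ρ 0 1)) * hpy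
      + (2 * (1 / (2 * (Real.pi : ℂ))) *
          (((Real.cos φ : ℝ) : ℂ) * ((Real.sin φ : ℝ) : ℂ) * (ρ 0 1 + ρ 1 0)
            + Complex.I * ((Real.cos φ : ℝ) : ℂ) * ((Real.cos φ : ℝ) : ℂ) * (ρ 1 0 - ρ 0 1))) * hx
      + (2 * (1 / (2 * (Real.pi : ℂ))) * ((Real.cos (θ/2) : ℝ) : ℂ) * ((Real.sin (θ/2) : ℝ) : ℂ) *
          (((Real.sin φ : ℝ) : ℂ) * (ρ 0 0 - ρ 1 1)
            - (((Real.cos θ : ℝ) : ℂ) / ((Real.sin θ : ℝ) : ℂ)) * ((Real.cos φ : ℝ) : ℂ) *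
              ((Real.sin φ : ℝ) : ℂ) * (ρ 0 1 + ρ 1 0))) * hi
  · rw [Qfun_expand, Qθ_eq, Qφ_eq]
    simp only [σy, Matrix.smul_apply, Matrix.sub_apply, Matrix.mul_apply, Fin.sum_univ_two,
      smul_eq_mul, Matrix.cons_val', Matrix.cons_val_zero, Matrix.cons_val_one,
      Matrix.head_cons, Matrix.head_fin_const, Matrix.empty_val',
      Matrix.cons_val_fin_one, Matrix.of_apply]
    rw [hEx, hEx', Complex.ofReal_mul, Complex.ofReal_div]
    linear_combination
      ((1 / (2 * (Real.pi : ℂ))) *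
        (((Real.cos (θ/2) : ℝ) : ℂ) * ((Real.cos (θ/2) : ℝ) : ℂ)
          - ((Real.sin (θ/2) : ℝ) : ℂ) * ((Real.sin (θ/2) : ℝ) : ℂ)) * (ρ 0 1 + ρ 1 0)) * hpy
      + (2 * (1 / (2 * (Real.pi : ℂ))) *
          (((Real.sin φ : ℝ) : ℂ) * ((Real.sin φ : ℝ) : ℂ) * (ρ 0 1 + ρ 1 0)
            + Complex.I * ((Real.cos φ : ℝ) : ℂ) * ((Real.sin φ : ℝ) : ℂ) * (ρ 1 0 - ρ 0 1))) * hx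
      + (-2 * (1 / (2 * (Real.pi : ℂ))) * ((Real.cos (θ/2) : ℝ) : ℂ) * ((Real.sin (θ/2) : ℝ) : ℂ) *
          (((Real.cos θ : ℝ) : ℂ) / ((Real.sin θ : ℝ) : ℂ)) * ((Real.sin φ : ℝ) : ℂ) *
          ((Real.sin φ : ℝ) : ℂ) * (ρ 0 1 + ρ 1 0)) * hi
      + (2 * (1 / (2 * (Real.pi : ℂ))) *
          (((Real.cos (θ/2) : ℝ) : ℂ) * ((Real.sin (θ/2) : ℝ) : ℂ) * ((Real.cos φ : ℝ) : ℂ) *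
              (ρ 1 1 - ρ 0 0)
            + (((Real.cos (θ/2) : ℝ) : ℂ) * ((Real.cos (θ/2) : ℝ) : ℂ)
                - ((Real.sin (θ/2) : ℝ) : ℂ) * ((Real.sin (θ/2) : ℝ) : ℂ)) *
              (ρ 0 1 + ρ 1 0) / 2)) * hi
  · rw [Qfun_expand, Qφ_eq]
    simp only [σz, Matrix.smul_apply, Matrix.sub_apply, Matrix.mul_apply, Fin.sum_univ_two,
      smul_eq_mul, Matrix.cons_val', Matrix.cons_val_zero, Matrix.cons_val_one,
      Matrix.head_cons, Matrix.head_fin_const, Matrix.empty_val',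
      Matrix.cons_val_fin_one, Matrix.of_apply]
    ring
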